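/- Consider the toggle-switch switching system with parameters satisfying 0 < l₁ < h₁, l₁ < θ₁, and θ₂ < l₂ < h₂ (so the production rate of x₂ always exceeds the threshold θ₂ at which x₂ acts on x₁). Then (l₁, h₂) is the unique equilibrium, and every pair of differentiable functions x₁, x₂ : [0, ∞) → ℝ satisfying the system for all t ≥ 0 converges to (l₁, h₂) as t → ∞; in particular there exists T ≥ 0 with x₂(t) > θ₂ for all t ≥ T, so the repressor x₂ is eventually permanently above its threshold. -/

import Mathlib

open Filter Real Set

private lemma aux_tendsto (a c d : ℝ) :
    Tendsto (fun t => c + d * Real.exp (a - t)) atTop (nhds c) := by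
  have h1 : Tendsto (fun t : ℝ => a - t) atTop atBot := by
    apply tendsto_atBot_add_const_left _ a tendsto_neg_atTop_atBot
  have h2 : Tendsto (fun t : ℝ => Real.exp (a - t)) atTop (nhds 0) :=
    Real.tendsto_exp_atBot.comp h1
  have := (tendsto_const_nhds (x := c) (f := atTop)).add (h2.const_mul d)
  simpa using this

private lemma aux_exact (f : ℝ → ℝ) (c a : ℝ)
    (hf : ∀ t, a ≤ t → HasDerivAt f (-f t + c) t) :
    ∀ t, a ≤ t → f t = c + (f a - c) * Real.exp (a - t) := by
  intro t ht
  set g : ℝ → ℝ := fun s => Real.exp s * (f s - c) with hg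
  have hgd : ∀ s, a ≤ s → HasDerivAt g 0 s := by
    intro s hs
    have h1 : HasDerivAt (fun s => f s - c) (-f s + c) s := (hf s hs).sub_const c
    have : HasDerivAt (fun s => Real.exp s * (f s - c)) (Real.exp s * (f s - c) + Real.exp s * (-f s + c)) s :=
      (Real.hasDerivAt_exp s).mul h1
    convert this using 1
    ring
  have hcont : ContinuousOn g (Icc a t) := fun s hs =>
    ((hgd s hs.1).continuousAt).continuousWithinAt
  have := constant_of_has_deriv_right_zero hcont
    (fun s hs => ((hgd s hs.1).hasDerivWithinAt)) t ⟨ht, le_refl t⟩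
  have heq : Real.exp t * (f t - c) = Real.exp a * (f a - c) := this
  have hexp : Real.exp (a - t) = Real.exp a / Real.exp t := by
    rw [Real.exp_sub]
  rw [hexp]
  field_simp
  nlinarith [heq]

private lemma aux_lower (f d : ℝ → ℝ) (c a : ℝ)
    (hf : ∀ t, a ≤ t → HasDerivAt f (d t) t)
    (hd : ∀ t, a ≤ t → -f t + c ≤ d t) :
    ∀ t, a ≤ t → c + (f a - c) * Real.exp (a - t) ≤ f t := by
  intro t ht
  set g : ℝ → ℝ := fun s => Real.exp s * (f s - c) with hg
  have hgd : ∀ s, a ≤ s → HasDerivAt g (Real.exp s * (d s + f s - c)) s := by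
    intro s hs
    have h1 : HasDerivAt (fun s => f s - c) (d s) s := (hf s hs).sub_const c
    have : HasDerivAt (fun s => Real.exp s * (f s - c)) (Real.exp s * (f s - c) + Real.exp s * d s) s :=
      (Real.hasDerivAt_exp s).mul h1
    convert this using 1
    ring
  have hmono : MonotoneOn g (Ici a) := by
    apply monotoneOn_of_hasDerivWithinAt_nonneg (convex_Ici a)
    · exact fun s hs => ((hgd s hs).continuousAt).continuousWithinAt
    · intro s hs
      rw [interior_Ici] at hs
      exact ((hgd s (le_of_lt hs)).hasDerivWithinAt)
    · intro s hs
      rw [interior_Ici] at hs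
      have := hd s (le_of_lt hs)
      have : 0 ≤ d s + f s - c := by linarith
      positivity
  have hle : g a ≤ g t := hmono (Set.mem_Ici.mpr le_rfl) ht ht
  have heq : Real.exp a * (f a - c) ≤ Real.exp t * (f t - c) := hle
  have hexp : Real.exp (a - t) = Real.exp a / Real.exp t := by rw [Real.exp_sub]
  rw [hexp]
  have het := Real.exp_pos t
  have h2 : (f a - c) * (Real.exp a / Real.exp t) ≤ f t - c := by
    rw [mul_div_assoc', div_le_iff₀ het]; nlinarith [heq]
  linarith

/-- Toggle-switch switching system with `0 < l₁ < h₁`, `l₁ < θ₁` and `θ₂ < l₂ < h₂`: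
`(l₁, h₂)` is the unique equilibrium, every solution converges to `(l₁, h₂)`, and in
particular the repressor `x₂` is eventually permanently above its threshold `θ₂`. -/
theorem stmt_5 (l₁ h₁ θ₁ l₂ h₂ θ₂ : ℝ)
    (hpos₁ : 0 < l₁) (hlh₁ : l₁ < h₁) (hlθ₁ : l₁ < θ₁)
    (hθl₂ : θ₂ < l₂) (hlh₂ : l₂ < h₂) :
    (∀ x₁ x₂ : ℝ,
      (x₁ = (if x₂ < θ₂ then h₁ else l₁) ∧ x₂ = (if x₁ < θ₁ then h₂ else l₂)) ↔
        (x₁ = l₁ ∧ x₂ = h₂)) ∧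
    (∀ x₁ x₂ : ℝ → ℝ,
      (∀ t, 0 ≤ t → HasDerivAt x₁ (-x₁ t + (if x₂ t < θ₂ then h₁ else l₁)) t) →
      (∀ t, 0 ≤ t → HasDerivAt x₂ (-x₂ t + (if x₁ t < θ₁ then h₂ else l₂)) t) →
      Tendsto (fun t => (x₁ t, x₂ t)) atTop (nhds (l₁, h₂)) ∧
      ∃ T, 0 ≤ T ∧ ∀ t, T ≤ t → θ₂ < x₂ t) := by
  constructor
  · intro x₁ x₂
    constructor
    · rintro ⟨h1, h2⟩
      have hx2 : θ₂ < x₂ := by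
        rw [h2]; split_ifs <;> linarith
      rw [if_neg (not_lt.mpr hx2.le)] at h1
      subst h1
      rw [if_pos hlθ₁] at h2
      exact ⟨rfl, h2⟩
    · rintro ⟨h1, h2⟩
      subst h1; subst h2
      rw [if_neg (by push_neg; linarith), if_pos hlθ₁]
      exact ⟨rfl, rfl⟩
  · intro x₁ x₂ hx1 hx2
    -- Step 1: lower bound on x₂
    have hlow : ∀ t, (0:ℝ) ≤ t → l₂ + (x₂ 0 - l₂) * Real.exp (0 - t) ≤ x₂ t := by
      apply aux_lower
      · exact hx2
      · intro t ht
        have : l₂ ≤ (if x₁ t < θ₁ then h₂ else l₂) := by split_ifs <;> linarith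
        linarith
    -- Step 2: eventually x₂ > θ₂
    have hT : ∃ T, 0 ≤ T ∧ ∀ t, T ≤ t → θ₂ < x₂ t := by
      have htd := aux_tendsto 0 l₂ (x₂ 0 - l₂)
      have hev : ∀ᶠ t in atTop, θ₂ < l₂ + (x₂ 0 - l₂) * Real.exp (0 - t) :=
        htd.eventually (eventually_gt_nhds hθl₂)
      obtain ⟨T, hT⟩ := (hev.and (eventually_ge_atTop 0)).exists_forall_of_atTop
      exact ⟨max T 0, le_max_right _ _, fun t ht => by
        have := hT t (le_trans (le_max_left T 0) ht)
        exact lt_of_lt_of_le this.1 (hlow t this.2)⟩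
    obtain ⟨T, hT0, hTx⟩ := hT
    -- Step 3: exact formula for x₁ on [T, ∞)
    have hx1T : ∀ t, T ≤ t → HasDerivAt x₁ (-x₁ t + l₁) t := by
      intro t ht
      have := hx1 t (hT0.trans ht)
      rwa [if_neg (not_lt.mpr (hTx t ht).le)] at this
    have hx1f := aux_exact x₁ l₁ T hx1T
    have hx1tend : Tendsto x₁ atTop (nhds l₁) := by
      apply (aux_tendsto T l₁ (x₁ T - l₁)).congr'
      filter_upwards [eventually_ge_atTop T] with t ht
      exact (hx1f t ht).symm
    -- Step 4: eventually x₁ < θ₁, then exact formula for x₂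
    have hev1 : ∀ᶠ t in atTop, x₁ t < θ₁ ∧ T ≤ t :=
      (hx1tend.eventually (eventually_lt_nhds hlθ₁)).and (eventually_ge_atTop T)
    obtain ⟨T', hT'⟩ := hev1.exists_forall_of_atTop
    set T'' := max T' T with hT''def
    have hT''T : T ≤ T'' := le_max_right _ _
    have hx2T : ∀ t, T'' ≤ t → HasDerivAt x₂ (-x₂ t + h₂) t := by
      intro t ht
      have hT't : T' ≤ t := le_trans (le_max_left _ _) ht
      have := hx2 t (hT0.trans (hT''T.trans ht))
      rwa [if_pos (hT' t hT't).1] at this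
    have hx2f := aux_exact x₂ h₂ T'' hx2T
    have hx2tend : Tendsto x₂ atTop (nhds h₂) := by
      apply (aux_tendsto T'' h₂ (x₂ T'' - h₂)).congr'
      filter_upwards [eventually_ge_atTop T''] with t ht
      exact (hx2f t ht).symm
    exact ⟨hx1tend.prodMk_nhds hx2tend, T, hT0, hTx⟩
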